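/- In any generalized grid graph with rows [0..N], suppose i+1 ≤ N, the vertices (i,d−1) and (i,d) are reachable, (i,d) is dominated by (i,d−1) (i.e. c(i,d−1) = c(i,d) − 1), and w(i+1,d−1) = 0 (diagonal d−1 has a match at row i+1). Then c(i+1,d) = c(i,d); moreover there exists a minimum-weight directed path from (0,0) to (i+1,d) that does not pass through the vertex (i,d), and (i+1,d) is dominated by (i+1,d−1). -/

import Mathlib

namespace Stmt5

/-- Total weight of a list of vertices regarded as a walk. -/
def pathCost {V : Type*} (wt : V → V → ℕ) : List V → ℕ
  | [] => 0
  | [_] => 0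
  | a :: b :: l => wt a b + pathCost wt (b :: l)

/-- `l` is a directed path (walk) from `s` to `v` in the graph with edge relation `E`. -/
def IsPath {V : Type*} (E : V → V → Prop) (s v : V) (l : List V) : Prop :=
  l.head? = some s ∧ l.getLast? = some v ∧ l.Chain' E

/-- Shortest-path cost from `s` to `v`. -/
noncomputable def cost {V : Type*} (E : V → V → Prop) (wt : V → V → ℕ) (s v : V) : ℕ :=
  sInf { c | ∃ l : List V, IsPath E s v l ∧ pathCost wt l = c }

/-- Vertices of a generalized grid graph with rows `[0..N]` and diagonals `[-t..t]`. -/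
def ggVertex (N t : ℕ) (v : ℤ × ℤ) : Prop :=
  0 ≤ v.1 ∧ v.1 ≤ (N : ℤ) ∧ -(t : ℤ) ≤ v.2 ∧ v.2 ≤ (t : ℤ)

/-- Edges of a generalized grid graph: deletion edges `(i,d) → (i+1,d-1)`,
insertion edges `(i,d) → (i,d+1)`, vertical edges `(i,d) → (i+1,d)`;
present only when both endpoints are vertices. -/
def ggEdge (N t : ℕ) (u v : ℤ × ℤ) : Prop :=
  ggVertex N t u ∧ ggVertex N t v ∧
    (v = (u.1 + 1, u.2 - 1) ∨ v = (u.1, u.2 + 1) ∨ v = (u.1 + 1, u.2))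

/-- Weights: a vertical edge `(i,d) → (i+1,d)` has weight `w (i+1) d`;
deletion and insertion edges have weight `1`. -/
def ggWt (w : ℤ → ℤ → ℕ) (u v : ℤ × ℤ) : ℕ :=
  if v = (u.1 + 1, u.2) then w v.1 v.2 else 1

/-- A vertex `(i,d)` is reachable if `i + d ≥ 0`. -/
def Reachable (N t : ℕ) (v : ℤ × ℤ) : Prop := ggVertex N t v ∧ 0 ≤ v.1 + v.2

/-- Shortest-path cost `c(i,d)` from `(0,0)` in the generalized grid graph. -/
noncomputable def ggCost (N t : ℕ) (w : ℤ → ℤ → ℕ) (v : ℤ × ℤ) : ℕ :=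
  cost (ggEdge N t) (ggWt w) (0, 0) v

/-- `(i,d)` is dominated by `(i,d-1)`. -/
def DomL (N t : ℕ) (w : ℤ → ℤ → ℕ) (v : ℤ × ℤ) : Prop :=
  Reachable N t v ∧ Reachable N t (v.1, v.2 - 1) ∧
    ggCost N t w (v.1, v.2 - 1) + 1 = ggCost N t w v

/-- `(i,d)` is dominated by `(i-1,d+1)`. -/
def DomU (N t : ℕ) (w : ℤ → ℤ → ℕ) (v : ℤ × ℤ) : Prop :=
  Reachable N t v ∧ Reachable N t (v.1 - 1, v.2 + 1) ∧
    ggCost N t w (v.1 - 1, v.2 + 1) + 1 = ggCost N t w v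

/-- Potency, defined by (well-founded, hence unambiguous) recursion in
lexicographic order: `(i,d)` is potent iff (dominated by `(i,d-1)` implies
`(i,d-1)` potent and `w (i+1) (d-1) = 1`) and (dominated by `(i-1,d+1)` implies
`(i-1,d+1)` potent and `w i (d+1) = 1`). -/
inductive Potent (N t : ℕ) (w : ℤ → ℤ → ℕ) : ℤ × ℤ → Prop where
  | mk : ∀ v : ℤ × ℤ,
      (DomL N t w v → Potent N t w (v.1, v.2 - 1)) →
      (DomL N t w v → w (v.1 + 1) (v.2 - 1) = 1) →
      (DomU N t w v → Potent N t w (v.1 - 1, v.2 + 1)) →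
      (DomU N t w v → w v.1 (v.2 + 1) = 1) →
      Potent N t w v

section Helpers

variable {V : Type*}

lemma pathCost_concat2 (wt : V → V → ℕ) (l : List V) (a b : V) :
    pathCost wt (l ++ [a, b]) = pathCost wt (l ++ [a]) + wt a b := by
  induction l with
  | nil => simp [pathCost]
  | cons c l ih =>
    cases l with
    | nil => simp [pathCost]
    | cons d l' =>
      calc pathCost wt ((c :: d :: l') ++ [a, b])
          = wt c d + pathCost wt ((d :: l') ++ [a, b]) := rfl
        _ = wt c d + (pathCost wt ((d :: l') ++ [a]) + wt a b) := by rw [ih]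
        _ = pathCost wt ((c :: d :: l') ++ [a]) + wt a b := by
            have : pathCost wt ((c :: d :: l') ++ [a])
                = wt c d + pathCost wt ((d :: l') ++ [a]) := rfl
            omega

lemma head?_append_left (l m : List V) (a : V) (h : l.head? = some a) :
    (l ++ m).head? = some a := by
  cases l <;> simp_all

lemma IsPath.concat {E : V → V → Prop} {s u v : V} {l : List V} (wt : V → V → ℕ)
    (h : IsPath E s u l) (he : E u v) :
    IsPath E s v (l ++ [v]) ∧ pathCost wt (l ++ [v]) = pathCost wt l + wt u v := by
  obtain ⟨h1, h2, h3⟩ := h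
  rcases l.eq_nil_or_concat with rfl | ⟨L, b, rfl⟩
  · simp at h1
  · simp only [List.concat_eq_append] at h1 h2 h3 ⊢
    have hb : b = u := by simpa using h2
    subst hb
    refine ⟨⟨head?_append_left _ _ _ h1, by simp, ?_⟩, ?_⟩
    · simp only [List.Chain']
      rw [List.isChain_append]
      exact ⟨h3, List.isChain_singleton v, by simpa using he⟩
    · rw [List.append_assoc]
      exact pathCost_concat2 wt L b v

lemma path_decompose {E : V → V → Prop} {s v : V} {l : List V} (wt : V → V → ℕ)
    (h : IsPath E s v l) (hlen : 2 ≤ l.length) :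
    ∃ (m : List V) (u : V), l = m ++ [v] ∧ IsPath E s u m ∧ E u v ∧
      pathCost wt l = pathCost wt m + wt u v ∧ m.length < l.length := by
  obtain ⟨h1, h2, h3⟩ := h
  rcases l.eq_nil_or_concat with rfl | ⟨L, b, rfl⟩
  · simp at hlen
  · simp only [List.concat_eq_append] at h1 h2 h3 hlen ⊢
    have hb : b = v := by simpa using h2
    subst hb
    rcases L.eq_nil_or_concat with rfl | ⟨M, u, rfl⟩
    · simp at hlen
    simp only [List.concat_eq_append] at h1 h2 h3 hlen ⊢
    simp only [List.Chain'] at h3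
    rw [List.isChain_append] at h3
    obtain ⟨hc1, _, hc3⟩ := h3
    refine ⟨M ++ [u], u, rfl, ⟨?_, by simp, hc1⟩, ?_, ?_, by simp⟩
    · cases hM : M ++ [u] with
      | nil => exact absurd hM (by simp)
      | cons x xs =>
        rw [hM] at h1
        simpa using h1
    · exact hc3 u (by simp) b (by simp)
    · rw [List.append_assoc]; exact pathCost_concat2 wt M u b

lemma chain'_rel_getLast {R : V → V → Prop} (hrefl : ∀ a, R a a)
    (htrans : ∀ a b c, R a b → R b c → R a c) :
    ∀ {l : List V} {u v : V}, l.Chain' R → u ∈ l → l.getLast? = some v → R u v := by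
  intro l
  induction l with
  | nil => simp
  | cons a l ih =>
    intro u v hc hm hg
    cases l with
    | nil =>
      simp at hm hg
      subst hm; subst hg; exact hrefl _
    | cons b l' =>
      have hg' : (b :: l').getLast? = some v := by
        rw [List.getLast?_cons_cons] at hg; exact hg
      simp only [List.Chain'] at hc
      rw [List.isChain_cons_cons] at hc
      rcases List.mem_cons.mp hm with rfl | hm'
      · exact htrans _ _ _ hc.1 (ih hc.2 (by simp) hg')
      · exact ih hc.2 hm' hg'

lemma cost_le_path {E : V → V → Prop} {wt : V → V → ℕ} {s v : V} {l : List V}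
    (h : IsPath E s v l) : cost E wt s v ≤ pathCost wt l :=
  Nat.sInf_le ⟨l, h, rfl⟩

lemma exists_min_path {E : V → V → Prop} {wt : V → V → ℕ} {s v : V}
    (h : ∃ l, IsPath E s v l) :
    ∃ l, IsPath E s v l ∧ pathCost wt l = cost E wt s v := by
  obtain ⟨l, hl⟩ := h
  have hne : {c | ∃ l : List V, IsPath E s v l ∧ pathCost wt l = c}.Nonempty :=
    ⟨pathCost wt l, l, hl, rfl⟩
  exact Nat.sInf_mem hne

variable {N t : ℕ} {w : ℤ → ℤ → ℕ}

lemma ggWt_ne {u v : ℤ × ℤ} (h : v ≠ (u.1 + 1, u.2)) : ggWt w u v = 1 := if_neg h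

lemma ggWt_eq {u v : ℤ × ℤ} (h : v = (u.1 + 1, u.2)) :
    ggWt w u v = w v.1 v.2 := if_pos h

lemma edge_rel {u v : ℤ × ℤ} (h : ggEdge N t u v) :
    (u.1 < v.1 ∨ (u.1 = v.1 ∧ u.2 ≤ v.2)) ∧ u.1 + u.2 ≤ v.1 + v.2 := by
  obtain ⟨_, _, hc⟩ := h
  rcases hc with hc | hc | hc <;> subst hc <;> constructor <;> simp <;> omega

lemma path_rel {s v : ℤ × ℤ} {l : List (ℤ × ℤ)} (h : IsPath (ggEdge N t) s v l)
    {u : ℤ × ℤ} (hu : u ∈ l) :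
    (u.1 < v.1 ∨ (u.1 = v.1 ∧ u.2 ≤ v.2)) ∧ u.1 + u.2 ≤ v.1 + v.2 := by
  set R : ℤ × ℤ → ℤ × ℤ → Prop := fun p q =>
    (p.1 < q.1 ∨ (p.1 = q.1 ∧ p.2 ≤ q.2)) ∧ p.1 + p.2 ≤ q.1 + q.2 with hR
  have hrefl : ∀ a, R a a := fun a => by simp [hR]
  have htrans : ∀ a b c, R a b → R b c → R a c := by
    intro a b c h1 h2
    simp only [hR] at *
    omega
  have hch : l.Chain' R := h.2.2.imp (fun _ _ hab => edge_rel hab)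
  exact chain'_rel_getLast hrefl htrans hch hu h.2.1

lemma mem_of_head {s v : ℤ × ℤ} {l : List (ℤ × ℤ)} (h : IsPath (ggEdge N t) s v l) :
    s ∈ l := by
  obtain ⟨h1, _, _⟩ := h
  cases l with
  | nil => simp at h1
  | cons a l' => simp at h1; subst h1; simp

lemma path_endpoint_sum {v : ℤ × ℤ} {l : List (ℤ × ℤ)}
    (h : IsPath (ggEdge N t) (0, 0) v l) : 0 ≤ v.1 + v.2 := by
  have := (path_rel h (mem_of_head h)).2
  simpa using this

lemma exists_path :
    ∀ (n : ℕ) (v : ℤ × ℤ), Reachable N t v → (2 * v.1 + v.2).toNat ≤ n →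
      ∃ l, IsPath (ggEdge N t) (0, 0) v l := by
  intro n
  induction n with
  | zero =>
    rintro ⟨v1, v2⟩ ⟨⟨a1, a2, a3, a4⟩, a5⟩ hm
    simp only at a1 a2 a3 a4 a5
    have : v1 = 0 ∧ v2 = 0 := by omega
    obtain ⟨rfl, rfl⟩ := this
    exact ⟨[(0, 0)], by simp [IsPath, List.Chain', List.isChain_singleton]⟩
  | succ n ih =>
    rintro ⟨v1, v2⟩ ⟨⟨a1, a2, a3, a4⟩, a5⟩ hm
    simp only at a1 a2 a3 a4 a5
    have hvx : ggVertex N t (v1, v2) := ⟨a1, a2, a3, a4⟩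
    by_cases hv0 : v1 = 0 ∧ v2 = 0
    · obtain ⟨rfl, rfl⟩ := hv0
      exact ⟨[(0, 0)], by simp [IsPath, List.Chain', List.isChain_singleton]⟩
    by_cases hv2 : 0 < v2
    · -- insertion from (v1, v2-1)
      have hvx' : ggVertex N t (v1, v2 - 1) := ⟨a1, a2, by omega, by omega⟩
      obtain ⟨l, hl⟩ := ih (v1, v2 - 1) ⟨hvx', by simp; omega⟩ (by simp; omega)
      have he : ggEdge N t (v1, v2 - 1) (v1, v2) :=
        ⟨hvx', hvx, Or.inr (Or.inl (by simp))⟩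
      exact ⟨_, (IsPath.concat (fun _ _ => (0:ℕ)) hl he).1⟩
    · by_cases hs : v1 + v2 = 0
      · -- deletion from (v1-1, v2+1)
        have hv1 : 0 < v1 := by omega
        have hvx' : ggVertex N t (v1 - 1, v2 + 1) := ⟨by omega, by omega, by omega, by omega⟩
        obtain ⟨l, hl⟩ := ih (v1 - 1, v2 + 1) ⟨hvx', by simp; omega⟩ (by simp; omega)
        have he : ggEdge N t (v1 - 1, v2 + 1) (v1, v2) :=
          ⟨hvx', hvx, Or.inl (by simp)⟩
        exact ⟨_, (IsPath.concat (fun _ _ => (0:ℕ)) hl he).1⟩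
      · -- vertical from (v1-1, v2)
        have hv1 : 0 < v1 := by omega
        have hvx' : ggVertex N t (v1 - 1, v2) := ⟨by omega, by omega, a3, a4⟩
        obtain ⟨l, hl⟩ := ih (v1 - 1, v2) ⟨hvx', by simp; omega⟩ (by simp; omega)
        have he : ggEdge N t (v1 - 1, v2) (v1, v2) :=
          ⟨hvx', hvx, Or.inr (Or.inr (by simp))⟩
        exact ⟨_, (IsPath.concat (fun _ _ => (0:ℕ)) hl he).1⟩
lemma cost_relax {u v : ℤ × ℤ} (hu : Reachable N t u) (he : ggEdge N t u v) :
    ggCost N t w v ≤ ggCost N t w u + ggWt w u v := by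
  obtain ⟨l, hl, hcost⟩ := exists_min_path (wt := ggWt w)
    (exists_path (2 * u.1 + u.2).toNat u hu le_rfl)
  obtain ⟨hp, hc⟩ := IsPath.concat (ggWt w) hl he
  calc ggCost N t w v ≤ pathCost (ggWt w) (l ++ [v]) := cost_le_path hp
    _ = pathCost (ggWt w) l + ggWt w u v := hc
    _ = ggCost N t w u + ggWt w u v := by rw [hcost]; rfl

lemma single_path {l : List (ℤ × ℤ)} {s v : ℤ × ℤ} (h : IsPath (ggEdge N t) s v l)
    (hlen : l.length < 2) : s = v ∧ pathCost (ggWt w) l = 0 := by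
  obtain ⟨h1, h2, _⟩ := h
  cases l with
  | nil => simp at h1
  | cons a l' =>
    cases l' with
    | nil =>
      simp at h1 h2
      subst h1; subst h2
      exact ⟨rfl, rfl⟩
    | cons b l'' => simp at hlen

lemma lemZ : ∀ (n : ℕ) (l : List (ℤ × ℤ)) (j e : ℤ), l.length ≤ n →
    IsPath (ggEdge N t) (0, 0) (j, e) l → j + e = 0 →
    j ≤ (pathCost (ggWt w) l : ℤ) := by
  intro n
  induction n with
  | zero =>
    intro l j e hlen hp _
    obtain ⟨h1, _, _⟩ := hp
    cases l with
    | nil => simp at h1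
    | cons a l' => simp at hlen
  | succ n ih =>
    intro l j e hlen hp hsum
    by_cases h2 : 2 ≤ l.length
    · obtain ⟨m, u, rfl, hm, he, hcost, hlt⟩ := path_decompose (ggWt w) hp h2
      obtain ⟨u1, u2⟩ := u
      have hssum : 0 ≤ u1 + u2 := by simpa using path_endpoint_sum hm
      rcases he.2.2 with hc | hc | hc
      · -- deletion : j = u1+1, e = u2-1
        have hju : j = u1 + 1 ∧ e = u2 - 1 := by
          simp [Prod.ext_iff] at hc; omega
        have hrec := ih m u1 u2 (by omega) hm (by omega)
        have hwt : ggWt w (u1, u2) (j, e) = 1 :=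
          ggWt_ne (by intro hcon; simp [Prod.ext_iff] at hcon; try omega)
        rw [hwt] at hcost
        push_cast [hcost]
        omega
      · -- insertion : u = (j, e-1), sum = -1 < 0
        have : u1 = j ∧ u2 = e - 1 := by simp [Prod.ext_iff] at hc; omega
        omega
      · -- vertical : u = (j-1, e), sum = -1 < 0
        have : u1 = j - 1 ∧ u2 = e := by simp [Prod.ext_iff] at hc; omega
        omega
    · have := single_path (w := w) hp (by omega)
      have hj : j = 0 := by
        have := this.1
        simp [Prod.ext_iff] at this
        omega
      omega

lemma delPath : ∀ (n : ℕ), (n : ℤ) ≤ N → (n : ℤ) ≤ t →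
    ∃ l, IsPath (ggEdge N t) (0, 0) ((n : ℤ), -(n : ℤ)) l ∧
      pathCost (ggWt w) l = n := by
  intro n
  induction n with
  | zero => exact fun _ _ => ⟨[(0, 0)], by simp [IsPath, List.Chain', List.isChain_singleton], rfl⟩
  | succ n ih =>
    intro hN ht
    push_cast at hN ht ⊢
    obtain ⟨l, hl, hc⟩ := ih (by omega) (by omega)
    have hvx : ggVertex N t ((n : ℤ), -(n : ℤ)) := ⟨by omega, by omega, by omega, by omega⟩
    have hvx' : ggVertex N t ((n : ℤ) + 1, -((n : ℤ) + 1)) :=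
      ⟨by omega, by omega, by omega, by omega⟩
    have he : ggEdge N t ((n : ℤ), -(n : ℤ)) ((n : ℤ) + 1, -((n : ℤ) + 1)) :=
      ⟨hvx, hvx', Or.inl (by simp [Prod.ext_iff] <;> omega)⟩
    obtain ⟨hp, hpc⟩ := IsPath.concat (ggWt w) hl he
    refine ⟨_, hp, ?_⟩
    rw [hpc, hc, ggWt_ne (by intro hcon; simp [Prod.ext_iff] at hcon; try omega)]
lemma ggCost_le_path {v : ℤ × ℤ} {l : List (ℤ × ℤ)}
    (h : IsPath (ggEdge N t) (0, 0) v l) :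
    ggCost N t w v ≤ pathCost (ggWt w) l := cost_le_path h

lemma lemS : ∀ (n : ℕ) (l : List (ℤ × ℤ)) (i d : ℤ), l.length ≤ n →
    IsPath (ggEdge N t) (0, 0) (i, d + 1) l → Reachable N t (i, d) →
    ggCost N t w (i, d) ≤ pathCost (ggWt w) l + 1 := by
  intro n
  induction n with
  | zero =>
    intro l i d hlen hp _
    obtain ⟨h1, _, _⟩ := hp
    cases l with
    | nil => simp at h1
    | cons a l' => simp at hlen
  | succ n ih =>
    intro l i d hlen hp hr
    obtain ⟨⟨b1, b2, b3, b4⟩, b5⟩ := hr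
    simp only at b1 b2 b3 b4 b5
    have hrr : Reachable N t (i, d) := ⟨⟨b1, b2, b3, b4⟩, b5⟩
    by_cases h2 : 2 ≤ l.length
    · obtain ⟨m, u, rfl, hm, he, hcost, hlt⟩ := path_decompose (ggWt w) hp h2
      obtain ⟨u1, u2⟩ := u
      obtain ⟨⟨c1, c2, c3, c4⟩, _, hcases⟩ := he
      simp only at c1 c2 c3 c4
      rcases hcases with hc | hc | hc
      · -- deletion: u = (i-1, d+2)
        have hcc : i = u1 + 1 ∧ d + 1 = u2 - 1 := by simpa [Prod.ext_iff] using hc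
        have hue : ((u1 : ℤ), (u2 : ℤ)) = (i - 1, d + 1 + 1) := by
          simp [Prod.ext_iff] <;> omega
        rw [hue] at hm
        have hr' : Reachable N t (i - 1, d + 1) :=
          ⟨⟨by omega, by omega, by omega, by omega⟩, by simp; omega⟩
        have hrec := ih m (i - 1) (d + 1) (by omega) hm hr'
        have hrel := cost_relax (w := w) (v := ((i : ℤ), (d : ℤ))) hr'
          ⟨hr'.1, ⟨b1, b2, b3, b4⟩, Or.inl (by simp [Prod.ext_iff] <;> omega)⟩
        have hwt1 : ggWt w (i - 1, d + 1) (i, d) = 1 :=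
          ggWt_ne (by intro hcon; simp [Prod.ext_iff] at hcon; try omega)
        have hwt2 : ggWt w (u1, u2) (i, d + 1) = 1 :=
          ggWt_ne (by intro hcon; simp [Prod.ext_iff] at hcon; try omega)
        rw [hwt1] at hrel
        rw [hwt2] at hcost
        omega
      · -- insertion: u = (i, d)
        have hcc : i = u1 ∧ d + 1 = u2 + 1 := by simpa [Prod.ext_iff] using hc
        have hue : ((u1 : ℤ), (u2 : ℤ)) = (i, d) := by simp [Prod.ext_iff] <;> omega
        rw [hue] at hm
        have hle := ggCost_le_path (w := w) hm
        omega
      · -- vertical: u = (i-1, d+1)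
        have hcc : i = u1 + 1 ∧ d + 1 = u2 := by simpa [Prod.ext_iff] using hc
        have hue : ((u1 : ℤ), (u2 : ℤ)) = (i - 1, d + 1) := by
          simp [Prod.ext_iff] <;> omega
        rw [hue] at hm
        have hr' : Reachable N t (i - 1, d + 1) :=
          ⟨⟨by omega, by omega, by omega, by omega⟩, by simp; omega⟩
        have hle := ggCost_le_path (w := w) hm
        have hrel := cost_relax (w := w) (v := ((i : ℤ), (d : ℤ))) hr'
          ⟨hr'.1, ⟨b1, b2, b3, b4⟩, Or.inl (by simp [Prod.ext_iff] <;> omega)⟩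
        have hwt1 : ggWt w (i - 1, d + 1) (i, d) = 1 :=
          ggWt_ne (by intro hcon; simp [Prod.ext_iff] at hcon; try omega)
        rw [hwt1] at hrel
        omega
    · have := single_path (w := w) hp (by omega)
      have : i = 0 ∧ d + 1 = 0 := by
        have h0 := this.1
        simpa [Prod.ext_iff, eq_comm] using h0
      omega

lemma lemM : ∀ (n : ℕ) (l : List (ℤ × ℤ)) (i d : ℤ), l.length ≤ n →
    IsPath (ggEdge N t) (0, 0) (i + 1, d) l → Reachable N t (i, d) →
    ggCost N t w (i, d) ≤ pathCost (ggWt w) l := by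
  intro n
  induction n with
  | zero =>
    intro l i d hlen hp _
    obtain ⟨h1, _, _⟩ := hp
    cases l with
    | nil => simp at h1
    | cons a l' => simp at hlen
  | succ n ih =>
    intro l i d hlen hp hr
    obtain ⟨⟨b1, b2, b3, b4⟩, b5⟩ := hr
    simp only at b1 b2 b3 b4 b5
    have hrr : Reachable N t (i, d) := ⟨⟨b1, b2, b3, b4⟩, b5⟩
    by_cases h2 : 2 ≤ l.length
    · obtain ⟨m, u, rfl, hm, he, hcost, hlt⟩ := path_decompose (ggWt w) hp h2
      obtain ⟨u1, u2⟩ := u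
      obtain ⟨⟨c1, c2, c3, c4⟩, _, hcases⟩ := he
      simp only at c1 c2 c3 c4
      rcases hcases with hc | hc | hc
      · -- deletion: u = (i, d+1)
        have hcc : i + 1 = u1 + 1 ∧ d = u2 - 1 := by simpa [Prod.ext_iff] using hc
        have hue : ((u1 : ℤ), (u2 : ℤ)) = (i, d + 1) := by simp [Prod.ext_iff] <;> omega
        rw [hue] at hm
        have hrec := lemS (w := w) n m i d (by omega) hm hrr
        have hwt2 : ggWt w (u1, u2) (i + 1, d) = 1 :=
          ggWt_ne (by intro hcon; simp [Prod.ext_iff] at hcon; try omega)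
        rw [hwt2] at hcost
        omega
      · -- insertion: u = (i+1, d-1)
        have hcc : i + 1 = u1 ∧ d = u2 + 1 := by simpa [Prod.ext_iff] using hc
        have hue : ((u1 : ℤ), (u2 : ℤ)) = (i + 1, d - 1) := by
          simp [Prod.ext_iff] <;> omega
        rw [hue] at hm
        have hwt2 : ggWt w (u1, u2) (i + 1, d) = 1 :=
          ggWt_ne (by intro hcon; simp [Prod.ext_iff] at hcon; try omega)
        rw [hwt2] at hcost
        by_cases hsd : 0 ≤ i + (d - 1)
        · have hr' : Reachable N t (i, d - 1) :=
            ⟨⟨b1, b2, by omega, by omega⟩, by simp; omega⟩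
          have hrec := ih m i (d - 1) (by omega) hm hr'
          have hrel := cost_relax (w := w) (v := ((i : ℤ), (d : ℤ))) hr'
            ⟨hr'.1, ⟨b1, b2, b3, b4⟩, Or.inr (Or.inl (by simp [Prod.ext_iff] <;> omega))⟩
          have hwt1 : ggWt w (i, d - 1) (i, d) = 1 :=
            ggWt_ne (by intro hcon; simp [Prod.ext_iff] at hcon; try omega)
          rw [hwt1] at hrel
          omega
        · have hsum0 : i + d = 0 := by omega
          have hZ := lemZ (N := N) (t := t) (w := w) n m (i + 1) (d - 1)
            (by omega) hm (by omega)
          obtain ⟨L, hL, hLc⟩ := delPath (N := N) (t := t) (w := w) i.toNat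
            (by push_cast; omega) (by push_cast; omega)
          have hLe : (((i.toNat : ℤ)), -((i.toNat : ℤ))) = ((i : ℤ), d) := by
            simp [Prod.ext_iff] <;> omega
          rw [hLe] at hL
          have hle := ggCost_le_path (w := w) hL
          omega
      · -- vertical: u = (i, d)
        have hcc : i + 1 = u1 + 1 ∧ d = u2 := by simpa [Prod.ext_iff] using hc
        have hue : ((u1 : ℤ), (u2 : ℤ)) = (i, d) := by simp [Prod.ext_iff] <;> omega
        rw [hue] at hm
        have hle := ggCost_le_path (w := w) hm
        omega
    · have := single_path (w := w) hp (by omega)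
      have h0 : (0 : ℤ) = i + 1 ∧ (0 : ℤ) = d := by
        have := this.1
        simpa [Prod.ext_iff] using this
      omega

end Helpers

theorem stmt5 (N t : ℕ) (w : ℤ → ℤ → ℕ)
    (hw1 : ∀ i d, w i d ≤ 1)
    (hw0 : ∀ i d : ℤ, ¬(1 ≤ i ∧ i ≤ (N : ℤ) ∧ -(t : ℤ) ≤ d ∧ d ≤ (t : ℤ)) → w i d = 0)
    (i d : ℤ) (hiN : i + 1 ≤ (N : ℤ))
    (h1 : Reachable N t (i, d - 1)) (h2 : Reachable N t (i, d))
    (hdom : ggCost N t w (i, d - 1) + 1 = ggCost N t w (i, d))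
    (hmatch : w (i + 1) (d - 1) = 0) :
    ggCost N t w (i + 1, d) = ggCost N t w (i, d) ∧
    (∃ l : List (ℤ × ℤ), IsPath (ggEdge N t) (0, 0) (i + 1, d) l ∧
      pathCost (ggWt w) l = ggCost N t w (i + 1, d) ∧ (i, d) ∉ l) ∧
    DomL N t w (i + 1, d) := by
  obtain ⟨⟨a1, a2, a3, a4⟩, a5⟩ := h1
  obtain ⟨⟨b1, b2, b3, b4⟩, b5⟩ := h2
  simp only at a1 a2 a3 a4 a5 b1 b2 b3 b4 b5
  have h1' : Reachable N t (i, d - 1) := ⟨⟨a1, a2, a3, a4⟩, a5⟩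
  have h2' : Reachable N t (i, d) := ⟨⟨b1, b2, b3, b4⟩, b5⟩
  have hvA : ggVertex N t (i + 1, d - 1) := ⟨by omega, by omega, by omega, by omega⟩
  have hrA : Reachable N t (i + 1, d - 1) := ⟨hvA, by simp <;> omega⟩
  have hvB : ggVertex N t (i + 1, d) := ⟨by omega, by omega, by omega, by omega⟩
  have hrB : Reachable N t (i + 1, d) := ⟨hvB, by simp <;> omega⟩
  have e1 : ggEdge N t (i, d - 1) (i + 1, d - 1) :=
    ⟨⟨a1, a2, a3, a4⟩, hvA, Or.inr (Or.inr (by simp [Prod.ext_iff] <;> omega))⟩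
  have hwt1 : ggWt w (i, d - 1) (i + 1, d - 1) = 0 := by
    have h := ggWt_eq (w := w) (u := ((i : ℤ), d - 1)) (v := ((i : ℤ) + 1, d - 1))
      (by simp)
    rw [h]
    exact hmatch
  have r1 := cost_relax (w := w) (v := ((i : ℤ) + 1, d - 1)) h1' e1
  rw [hwt1] at r1
  have e2 : ggEdge N t (i + 1, d - 1) (i + 1, d) :=
    ⟨hvA, hvB, Or.inr (Or.inl (by simp [Prod.ext_iff] <;> omega))⟩
  have hwt2 : ggWt w (i + 1, d - 1) (i + 1, d) = 1 :=
    ggWt_ne (by intro hcon; simp [Prod.ext_iff] at hcon; try omega)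
  have r2 := cost_relax (w := w) (v := ((i : ℤ) + 1, d)) hrA e2
  rw [hwt2] at r2
  obtain ⟨P, hP, hPc⟩ := exists_min_path (wt := ggWt w)
    (exists_path (2 * ((i : ℤ) + 1) + d).toNat ((i : ℤ) + 1, d) hrB le_rfl)
  have hPc' : pathCost (ggWt w) P = ggCost N t w (i + 1, d) := hPc
  have low1 := lemM (w := w) P.length P i d le_rfl hP h2'
  obtain ⟨Q, hQ, hQc⟩ := exists_min_path (wt := ggWt w)
    (exists_path (2 * ((i : ℤ) + 1) + (d - 1)).toNat ((i : ℤ) + 1, d - 1) hrA le_rfl)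
  have hQc' : pathCost (ggWt w) Q = ggCost N t w (i + 1, d - 1) := hQc
  have low2 := lemM (w := w) Q.length Q i (d - 1) le_rfl hQ h1'
  rw [hPc'] at low1
  rw [hQc'] at low2
  have heqA : ggCost N t w (i + 1, d - 1) = ggCost N t w (i, d - 1) := by omega
  have heqB : ggCost N t w (i + 1, d) = ggCost N t w (i, d) := by omega
  refine ⟨heqB, ?_, ?_⟩
  · obtain ⟨L, hL, hLc⟩ := exists_min_path (wt := ggWt w)
      (exists_path (2 * (i : ℤ) + (d - 1)).toNat ((i : ℤ), d - 1) h1' le_rfl)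
    have hLc' : pathCost (ggWt w) L = ggCost N t w (i, d - 1) := hLc
    obtain ⟨hL1, hL1c⟩ := IsPath.concat (ggWt w) hL e1
    obtain ⟨hL2, hL2c⟩ := IsPath.concat (ggWt w) hL1 e2
    refine ⟨(L ++ [(i + 1, d - 1)]) ++ [(i + 1, d)], hL2, ?_, ?_⟩
    · rw [hL2c, hL1c, hwt1, hwt2, hLc']
      omega
    · intro hmem
      simp only [List.mem_append, List.mem_singleton] at hmem
      rcases hmem with hmem | hmem
      rcases hmem with hmem | hmem
      · have hrel := (path_rel hL hmem).1
        simp only at hrel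
        omega
      · simp only [Prod.ext_iff] at hmem
        omega
      · simp only [Prod.ext_iff] at hmem
        omega
  · refine ⟨hrB, hrA, ?_⟩
    show ggCost N t w (i + 1, d - 1) + 1 = ggCost N t w (i + 1, d)
    omega
end Stmt5
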